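/- (Earnshaw-type obstruction) Let H : ℝ³ → ℝ³ be a twice continuously differentiable vector field with div H = 0 and curl H = 0 everywhere, let k > 0, and set U(x) = -k‖H(x)‖². Then at no point x₀ is the Hessian of U positive definite; consequently U has no non-degenerate local minimum. -/

import Mathlib

/-- Partial derivative of a scalar field on `ℝ³` in the `i`-th coordinate direction. -/
noncomputable def pderiv3 (i : Fin 3) (f : EuclideanSpace ℝ (Fin 3) → ℝ)
    (x : EuclideanSpace ℝ (Fin 3)) : ℝ :=
  fderiv ℝ f x (EuclideanSpace.single i 1)

/-- Divergence of a vector field on `ℝ³`. -/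
noncomputable def div3 (H : EuclideanSpace ℝ (Fin 3) → EuclideanSpace ℝ (Fin 3))
    (x : EuclideanSpace ℝ (Fin 3)) : ℝ :=
  ∑ i : Fin 3, pderiv3 i (fun y => H y i) x

/-- Curl of a vector field on `ℝ³`, componentwise. -/
noncomputable def curl3 (H : EuclideanSpace ℝ (Fin 3) → EuclideanSpace ℝ (Fin 3))
    (x : EuclideanSpace ℝ (Fin 3)) : Fin 3 → ℝ :=
  ![pderiv3 1 (fun y => H y 2) x - pderiv3 2 (fun y => H y 1) x,
    pderiv3 2 (fun y => H y 0) x - pderiv3 0 (fun y => H y 2) x,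
    pderiv3 0 (fun y => H y 1) x - pderiv3 1 (fun y => H y 0) x]

/-- The Hessian of a scalar field `f` at `x`, as the bilinear form `(v, w) ↦ D²f(x)[v, w]`. -/
noncomputable def hessian3 (f : EuclideanSpace ℝ (Fin 3) → ℝ)
    (x v w : EuclideanSpace ℝ (Fin 3)) : ℝ :=
  fderiv ℝ (fderiv ℝ f) x v w

local notation "E3" => EuclideanSpace ℝ (Fin 3)

lemma hess_eq (f : E3 → ℝ) (hf : ContDiff ℝ 2 f) (x v w : E3) :
    fderiv ℝ (fun y => fderiv ℝ f y w) x v = hessian3 f x v w := by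
  have hd : DifferentiableAt ℝ (fderiv ℝ f) x :=
    ((hf.fderiv_right (m := 1) le_rfl).differentiable one_ne_zero) x
  rw [fderiv_clm_apply hd (differentiableAt_const w)]
  simp [hessian3]

lemma fderivU (k : ℝ) (H : E3 → E3) (hH : ContDiff ℝ 2 H) (y w : E3) :
    fderiv ℝ (fun y => -k * ‖H y‖ ^ 2) y w
      = -k * ∑ j, 2 * (H y j * fderiv ℝ (fun z => H z j) y w) := by
  have hfj : ∀ j, ContDiff ℝ 2 (fun y : E3 => H y j) := fun j =>
    (EuclideanSpace.proj j : E3 →L[ℝ] ℝ).contDiff.comp hH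
  have hfd : ∀ j, DifferentiableAt ℝ (fun y : E3 => H y j) y := fun j =>
    ((hfj j).differentiable (by norm_num)) y
  have hnorm : (fun y : E3 => -k * ‖H y‖ ^ 2) = fun y => -k * ∑ j, H y j * H y j := by
    funext y
    rw [← real_inner_self_eq_norm_sq, PiLp.inner_apply]
    simp [RCLike.inner_apply]
    left; exact Finset.sum_congr rfl fun j _ => sq _
  have h1 : HasFDerivAt (fun y : E3 => -k * ‖H y‖ ^ 2)
      ((-k) • ∑ j : Fin 3, (H y j • fderiv ℝ (fun z => H z j) y
        + H y j • fderiv ℝ (fun z => H z j) y)) y := by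
    rw [hnorm]
    exact (HasFDerivAt.fun_sum (fun j _ => ((hfd j).hasFDerivAt.mul (hfd j).hasFDerivAt))).const_mul (-k)
  rw [h1.fderiv]
  simp [ContinuousLinearMap.sum_apply, Finset.mul_sum]
  ring_nf

lemma hessU (k : ℝ) (H : E3 → E3) (hH : ContDiff ℝ 2 H) (x v w : E3) :
    hessian3 (fun y => -k * ‖H y‖ ^ 2) x v w
      = -k * ∑ j, 2 * (fderiv ℝ (fun z => H z j) x v * fderiv ℝ (fun z => H z j) x w
          + H x j * hessian3 (fun z => H z j) x v w) := by
  have hfj : ∀ j, ContDiff ℝ 2 (fun y : E3 => H y j) := fun j =>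
    (EuclideanSpace.proj j : E3 →L[ℝ] ℝ).contDiff.comp hH
  have hU2 : ContDiff ℝ 2 (fun y : E3 => -k * ‖H y‖ ^ 2) := contDiff_const.mul (hH.norm_sq ℝ)
  rw [← hess_eq _ hU2 x v w]
  have hfun : (fun y : E3 => fderiv ℝ (fun y => -k * ‖H y‖ ^ 2) y w)
      = fun y => -k * ∑ j, 2 * (H y j * fderiv ℝ (fun z => H z j) y w) := by
    funext y; exact fderivU k H hH y w
  rw [hfun]
  have hfd : ∀ j, DifferentiableAt ℝ (fun y : E3 => H y j) x := fun j =>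
    ((hfj j).differentiable (by norm_num)) x
  have hGd : ∀ j, DifferentiableAt ℝ (fun y : E3 => fderiv ℝ (fun z => H z j) y w) x := fun j =>
    ((((hfj j).fderiv_right (m := 1) le_rfl).differentiable one_ne_zero) x).clm_apply
      (differentiableAt_const w)
  have hprod : ∀ j, DifferentiableAt ℝ
      (fun y : E3 => H y j * fderiv ℝ (fun z => H z j) y w) x := fun j => (hfd j).mul (hGd j)
  rw [fderiv_const_mul (by
    exact DifferentiableAt.fun_sum fun j _ => (hprod j).const_mul 2) (-k)]
  rw [show (fun y : E3 => ∑ j, 2 * (H y j * fderiv ℝ (fun z => H z j) y w))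
      = fun y => ∑ j : Fin 3, 2 * (H y j * fderiv ℝ (fun z => H z j) y w) from rfl]
  rw [fderiv_fun_sum (fun j _ => (hprod j).const_mul 2)]
  simp only [ContinuousLinearMap.smul_apply, ContinuousLinearMap.sum_apply, smul_eq_mul]
  congr 1
  apply Finset.sum_congr rfl
  intro j _
  rw [fderiv_const_mul (hprod j) 2]
  rw [fderiv_fun_mul (hfd j) (hGd j)]
  simp only [ContinuousLinearMap.smul_apply, ContinuousLinearMap.add_apply, smul_eq_mul]
  rw [hess_eq _ (hfj j) x v w]
  ring

lemma sym_pderiv (H : E3 → E3) (hcurl : ∀ x, curl3 H x = 0) (i j : Fin 3) (x : E3) :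
    pderiv3 i (fun y => H y j) x = pderiv3 j (fun y => H y i) x := by
  have h := congrFun (hcurl x)
  have h0 := h 0; have h1 := h 1; have h2 := h 2
  simp [curl3, sub_eq_zero] at h0 h1 h2
  fin_cases i <;> fin_cases j <;> simp_all

lemma lap_zero (H : E3 → E3) (hH : ContDiff ℝ 2 H)
    (hdiv : ∀ x, div3 H x = 0) (hcurl : ∀ x, curl3 H x = 0) (j : Fin 3) (x : E3) :
    ∑ i : Fin 3, hessian3 (fun y => H y j) x
      (EuclideanSpace.single i 1) (EuclideanSpace.single i 1) = 0 := by
  have hfj : ∀ j, ContDiff ℝ 2 (fun y : E3 => H y j) := fun j =>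
    (EuclideanSpace.proj j : E3 →L[ℝ] ℝ).contDiff.comp hH
  have hpd : ∀ m l, Differentiable ℝ (pderiv3 m (fun y : E3 => H y l)) := fun m l =>
    ((((hfj l).fderiv_right (m := 1) le_rfl).differentiable one_ne_zero)).clm_apply
      (differentiable_const _)
  have key : ∀ i : Fin 3, hessian3 (fun y => H y j) x
      (EuclideanSpace.single i 1) (EuclideanSpace.single i 1)
      = fderiv ℝ (pderiv3 i (fun y => H y i)) x (EuclideanSpace.single j 1) := by
    intro i
    rw [← hess_eq _ (hfj j) x]
    have e1 : (fun y : E3 => fderiv ℝ (fun z => H z j) y (EuclideanSpace.single i 1))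
        = pderiv3 j (fun z => H z i) := by
      funext y
      exact sym_pderiv H hcurl i j y
    rw [e1]
    have e2 : fderiv ℝ (pderiv3 j fun z => H z i) x (EuclideanSpace.single i 1)
        = hessian3 (fun z => H z i) x (EuclideanSpace.single i 1) (EuclideanSpace.single j 1) :=
      hess_eq _ (hfj i) x _ _
    rw [e2, show hessian3 (fun z => H z i) x (EuclideanSpace.single i 1)
        (EuclideanSpace.single j 1) = hessian3 (fun z => H z i) x (EuclideanSpace.single j 1)
        (EuclideanSpace.single i 1) from
      ((hfj i).contDiffAt.isSymmSndFDerivAt (by norm_num)) _ _]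
    exact (hess_eq _ (hfj i) x _ _).symm
  simp only [key]
  have e3 : ∑ i : Fin 3, fderiv ℝ (pderiv3 i (fun y => H y i)) x (EuclideanSpace.single j 1)
      = fderiv ℝ (fun y => ∑ i : Fin 3, pderiv3 i (fun z => H z i) y) x
          (EuclideanSpace.single j 1) := by
    rw [fderiv_fun_sum (fun i _ => (hpd i i) x)]
    simp [ContinuousLinearMap.sum_apply]
  rw [e3]
  have e4 : (fun y : E3 => ∑ i : Fin 3, pderiv3 i (fun z => H z i) y) = fun _ => (0 : ℝ) := by
    funext y; exact hdiv y
  rw [e4, fderiv_fun_const]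
  simp

/-- **Earnshaw-type obstruction.**  If `H` is a `C²` divergence-free and curl-free vector
field on `ℝ³`, `k > 0`, and `U = -k‖H‖²`, then at no point is the Hessian of `U`
positive definite; consequently `U` has no non-degenerate local minimum. -/
theorem stmt1 (H : EuclideanSpace ℝ (Fin 3) → EuclideanSpace ℝ (Fin 3))
    (hH : ContDiff ℝ 2 H) (k : ℝ) (hk : 0 < k)
    (hdiv : ∀ x, div3 H x = 0) (hcurl : ∀ x, curl3 H x = 0)
    (U : EuclideanSpace ℝ (Fin 3) → ℝ) (hU : U = fun y => -k * ‖H y‖ ^ 2) :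
    (∀ x₀ : EuclideanSpace ℝ (Fin 3),
      ¬ (∀ v : EuclideanSpace ℝ (Fin 3), v ≠ 0 → 0 < hessian3 U x₀ v v)) ∧
    (∀ x₀ : EuclideanSpace ℝ (Fin 3),
      ¬ (fderiv ℝ U x₀ = 0 ∧
        ∀ v : EuclideanSpace ℝ (Fin 3), v ≠ 0 → 0 < hessian3 U x₀ v v)) := by
  have main : ∀ x₀ : E3, ¬ (∀ v : E3, v ≠ 0 → 0 < hessian3 U x₀ v v) := by
    intro x₀ hpos
    have hne : ∀ i : Fin 3, (EuclideanSpace.single i (1 : ℝ) : E3) ≠ 0 := by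
      intro i h
      have := congrArg (fun z : E3 => z i) h
      simp [EuclideanSpace.single_apply] at this
    have hsum : 0 < ∑ i : Fin 3,
        hessian3 U x₀ (EuclideanSpace.single i 1) (EuclideanSpace.single i 1) :=
      Finset.sum_pos (fun i _ => hpos _ (hne i)) (by simp)
    set a : Fin 3 → Fin 3 → ℝ := fun i j =>
      fderiv ℝ (fun z => H z j) x₀ (EuclideanSpace.single i 1) with ha
    set b : Fin 3 → Fin 3 → ℝ := fun i j =>
      hessian3 (fun z => H z j) x₀ (EuclideanSpace.single i 1) (EuclideanSpace.single i 1) with hb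
    have heq : ∑ i : Fin 3,
        hessian3 U x₀ (EuclideanSpace.single i 1) (EuclideanSpace.single i 1)
        = -k * ∑ i : Fin 3, ∑ j : Fin 3, 2 * (a i j * a i j + H x₀ j * b i j) := by
      rw [hU, Finset.sum_congr rfl fun i _ => hessU k H hH x₀ _ _, ← Finset.mul_sum]
    have hzero : ∑ i : Fin 3, ∑ j : Fin 3, 2 * (H x₀ j * b i j) = 0 := by
      rw [Finset.sum_comm]
      apply Finset.sum_eq_zero
      intro j _
      have hz : ∑ i : Fin 3, b i j = 0 := lap_zero H hH hdiv hcurl j x₀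
      calc ∑ i : Fin 3, 2 * (H x₀ j * b i j)
          = (2 * H x₀ j) * ∑ i : Fin 3, b i j := by
            rw [Finset.mul_sum]; exact Finset.sum_congr rfl fun i _ => by ring
        _ = 0 := by rw [hz, mul_zero]
    have hsq : 0 ≤ ∑ i : Fin 3, ∑ j : Fin 3, 2 * (a i j * a i j) :=
      Finset.sum_nonneg fun i _ => Finset.sum_nonneg fun j _ => by nlinarith [mul_self_nonneg (a i j)]
    have hsplit : ∑ i : Fin 3, ∑ j : Fin 3, 2 * (a i j * a i j + H x₀ j * b i j)
        = (∑ i : Fin 3, ∑ j : Fin 3, 2 * (a i j * a i j))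
          + ∑ i : Fin 3, ∑ j : Fin 3, 2 * (H x₀ j * b i j) := by
      rw [← Finset.sum_add_distrib]
      refine Finset.sum_congr rfl fun i _ => ?_
      rw [← Finset.sum_add_distrib]
      exact Finset.sum_congr rfl fun j _ => by ring
    rw [heq, hsplit, hzero, add_zero] at hsum
    nlinarith
  exact ⟨main, fun x₀ h => main x₀ h.2⟩
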